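/- For the harmonic ensemble on the d-dimensional flat torus with parameter T (a determinantal point process with N = (2T+1)^d points), for every nonzero k ∈ ℤ^d, the expected squared modulus of the exponential sum satisfies E|∑_{n=1}^N e^{2πi⟨k,X_n⟩}|² = N − ∏_{j=1}^d max{2T+1−|k_j|, 0}. -/

import Mathlib

open MeasureTheory Real

/-- The character `x ↦ e^{2πi⟨k,x⟩}` on the torus `𝕋^d = ℝ^d/ℤ^d`. -/
noncomputable def ep (d : ℕ) (k : Fin d → ℤ) (x : Fin d → ℝ) : ℂ :=
  Complex.exp (2 * π * Complex.I * ∑ j, (k j : ℂ) * (x j : ℂ))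

/-- A fundamental domain `[0,1)^d` for the torus `𝕋^d`. -/
def cube (d : ℕ) : Set (Fin d → ℝ) := Set.univ.pi fun _ => Set.Ico 0 1

lemma ep_mul {d : ℕ} (a b : Fin d → ℤ) (x : Fin d → ℝ) :
    ep d a x * ep d b x = ep d (a + b) x := by
  unfold ep
  rw [← Complex.exp_add, ← mul_add, ← Finset.sum_add_distrib]
  congr 2
  refine Finset.sum_congr rfl fun j _ => ?_
  simp only [Pi.add_apply]
  push_cast
  ring

lemma ep_zero {d : ℕ} (x : Fin d → ℝ) : ep d 0 x = 1 := by
  simp [ep]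

lemma ep_conj {d : ℕ} (m : Fin d → ℤ) (y : Fin d → ℝ) :
    (starRingEnd ℂ) (ep d m y) = ep d (-m) y := by
  unfold ep
  rw [← Complex.exp_conj]
  congr 1
  simp only [map_mul, map_sum, Complex.conj_I, Complex.conj_ofReal, map_ofNat,
    Pi.neg_apply, Int.cast_neg]
  rw [Finset.mul_sum, Finset.mul_sum]
  refine Finset.sum_congr rfl fun j _ => ?_
  rw [map_intCast]
  ring

lemma ep_sub {d : ℕ} (m : Fin d → ℤ) (x y : Fin d → ℝ) :
    ep d m (fun j => x j - y j) = ep d m x * ep d (-m) y := by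
  unfold ep
  rw [← Complex.exp_add, ← mul_add, ← Finset.sum_add_distrib]
  congr 2
  refine Finset.sum_congr rfl fun j _ => ?_
  simp only [Pi.neg_apply]
  push_cast
  ring

lemma ep_continuous {d : ℕ} (m : Fin d → ℤ) : Continuous (ep d m) := by
  unfold ep
  exact Complex.continuous_exp.comp (continuous_const.mul (continuous_finset_sum _
    fun j _ => continuous_const.mul (Complex.continuous_ofReal.comp (continuous_apply j))))

lemma ep_integrable {d : ℕ} (m : Fin d → ℤ) : IntegrableOn (ep d m) (cube d) := by
  refine IntegrableOn.mono_set ?_ (Set.pi_mono fun j _ => Set.Ico_subset_Icc_self)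
  exact (ep_continuous m).continuousOn.integrableOn_compact
    (isCompact_univ_pi fun _ => isCompact_Icc)

lemma int1d (m : ℤ) :
    ∫ x in Set.Ico (0:ℝ) 1, Complex.exp (2 * π * Complex.I * m * x) =
      if m = 0 then 1 else 0 := by
  rw [MeasureTheory.Measure.restrict_congr_set MeasureTheory.Ico_ae_eq_Ioc,
    ← intervalIntegral.integral_of_le
    (by norm_num : (0:ℝ) ≤ 1)]
  by_cases hm : m = 0
  · simp [hm]
  · have hc : (2 * π * Complex.I * m : ℂ) ≠ 0 := by
      simp [Real.pi_ne_zero, Complex.I_ne_zero, hm]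
    have : ∀ x : ℝ, Complex.exp (2 * π * Complex.I * m * x) =
        Complex.exp ((2 * π * Complex.I * m) * x) := fun x => rfl
    rw [if_neg hm]
    rw [integral_exp_mul_complex hc]
    have h1 : (2 * π * Complex.I * m : ℂ) * (1:ℝ) = m * (2 * π * Complex.I) := by
      push_cast; ring
    have h0 : (2 * π * Complex.I * m : ℂ) * (0:ℝ) = 0 := by push_cast; ring
    rw [h1, h0, Complex.exp_int_mul_two_pi_mul_I, Complex.exp_zero, sub_self, zero_div]

lemma cube_int {d : ℕ} (m : Fin d → ℤ) :
    ∫ x in cube d, ep d m x = if m = 0 then 1 else 0 := by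
  have hmeas : MeasurableSet (cube d) :=
    MeasurableSet.univ_pi fun _ => measurableSet_Ico
  rw [← MeasureTheory.integral_indicator hmeas]
  have hind : (cube d).indicator (ep d m) = fun x =>
      ∏ j, (Set.Ico (0:ℝ) 1).indicator
        (fun t => Complex.exp (2 * π * Complex.I * (m j) * t)) (x j) := by
    funext x
    by_cases hx : x ∈ cube d
    · rw [Set.indicator_of_mem hx]
      have : ∀ j, (Set.Ico (0:ℝ) 1).indicator
          (fun t => Complex.exp (2 * π * Complex.I * (m j) * t)) (x j) =
          Complex.exp (2 * π * Complex.I * (m j) * (x j)) := fun j =>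
        Set.indicator_of_mem (hx j (Set.mem_univ j)) _
      simp only [this]
      unfold ep
      rw [← Complex.exp_sum]
      congr 1
      rw [Finset.mul_sum]
      exact Finset.sum_congr rfl fun j _ => by ring
    · rw [Set.indicator_of_notMem hx]
      have hex : ∃ j, x j ∉ Set.Ico (0:ℝ) 1 := by
        by_contra h
        push_neg at h
        exact hx fun j _ => h j
      obtain ⟨j, hj⟩ := hex
      refine (Finset.prod_eq_zero (Finset.mem_univ j) ?_).symm
      exact Set.indicator_of_notMem hj _
  rw [hind]
  beta_reduce
  rw [volume_pi, MeasureTheory.integral_fintype_prod_eq_prod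
    (fun j => (Set.Ico (0:ℝ) 1).indicator
      (fun t => Complex.exp (2 * π * Complex.I * (m j) * t)))]
  have : ∀ j, ∫ t : ℝ, (Set.Ico (0:ℝ) 1).indicator
      (fun t => Complex.exp (2 * π * Complex.I * (m j) * t)) t =
      if m j = 0 then 1 else 0 := fun j => by
    rw [MeasureTheory.integral_indicator measurableSet_Ico]
    exact int1d (m j)
  simp only [this]
  by_cases hm : m = 0
  · simp [hm]
  · obtain ⟨j, hj⟩ := Function.ne_iff.mp hm
    rw [if_neg hm]
    exact Finset.prod_eq_zero (Finset.mem_univ j) (by simp [show m j ≠ 0 by simpa using hj])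

lemma volume_cube (d : ℕ) : volume (cube d) = 1 := by
  rw [cube, volume_pi, MeasureTheory.Measure.pi_pi]
  simp

lemma count_card (d T : ℕ) (k : Fin d → ℤ) :
    ((((Fintype.piFinset fun _ : Fin d => Finset.Icc (-(T:ℤ)) T).filter
      fun a => a + k ∈ Fintype.piFinset fun _ : Fin d => Finset.Icc (-(T:ℤ)) T).card : ℝ))
      = ∏ j, max (2 * (T : ℝ) + 1 - |(k j : ℝ)|) 0 := by
  have h1 : ((Fintype.piFinset fun _ : Fin d => Finset.Icc (-(T:ℤ)) T).filter
      fun a => a + k ∈ Fintype.piFinset fun _ : Fin d => Finset.Icc (-(T:ℤ)) T) =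
      Fintype.piFinset fun j => (Finset.Icc (-(T:ℤ)) T).filter
        fun t => t + k j ∈ Finset.Icc (-(T:ℤ)) T := by
    ext a
    simp only [Finset.mem_filter, Fintype.mem_piFinset, Pi.add_apply]
    rw [forall_and]
  rw [h1, Fintype.card_piFinset]
  push_cast
  refine Finset.prod_congr rfl fun j _ => ?_
  have h2 : (Finset.Icc (-(T:ℤ)) T).filter (fun t => t + k j ∈ Finset.Icc (-(T:ℤ)) T) =
      Finset.Icc (max (-(T:ℤ)) (-(T:ℤ) - k j)) (min (T:ℤ) (T - k j)) := by
    ext t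
    simp only [Finset.mem_filter, Finset.mem_Icc, le_max_iff, max_le_iff, le_min_iff,
      min_le_iff]
    omega
  rw [h2, Int.card_Icc]
  have h3 : min (T:ℤ) (T - k j) + 1 - max (-(T:ℤ)) (-(T:ℤ) - k j) = 2*T+1 - |k j| := by
    rcases abs_cases (k j) with ⟨h, h'⟩ | ⟨h, h'⟩ <;> omega
  rw [h3]
  have h4 : (((2*(T:ℤ)+1-|k j|).toNat : ℝ)) = (((2*(T:ℤ)+1-|k j|).toNat : ℤ) : ℝ) := by
    push_cast; ring
  rw [h4, Int.toNat_eq_max]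
  push_cast [Int.cast_abs]
  ring_nf

/-- For the harmonic ensemble on `𝕋^d` with parameter `T` (the determinantal
point process with `N = (2T+1)^d` points and projection kernel
`K(x,y) = ∑_{‖k‖_∞ ≤ T} e^{2πi⟨k,x−y⟩}`, so that the variance identity
`E|∑_n f(X_n)|² = N + ∬(N² − |K|²) f(x) conj (f y)` holds for characters),
for every nonzero `k ∈ ℤ^d`,
`E|∑_{n=1}^N e^{2πi⟨k,X_n⟩}|² = N − ∏_j max{2T+1−|k_j|, 0}`. -/
theorem stmt_4 (d T : ℕ) (hd : 1 ≤ d) (N : ℕ) (hN : N = (2 * T + 1) ^ d)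
    {Ω : Type} [MeasureSpace Ω] [IsProbabilityMeasure (volume : Measure Ω)]
    (X : Fin N → Ω → (Fin d → ℝ))
    (K : (Fin d → ℝ) → (Fin d → ℝ) → ℂ)
    (hK : ∀ x y, K x y =
      ∑ k ∈ Fintype.piFinset (fun _ : Fin d => Finset.Icc (-(T:ℤ)) T),
        ep d k (fun j => x j - y j))
    (hvar : ∀ k : Fin d → ℤ, k ≠ 0 →
      ((∫ ω, ‖∑ n, ep d k (X n ω)‖ ^ 2 : ℝ) : ℂ) =
        (N : ℂ) + ∫ x in cube d, ∫ y in cube d,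
          ((N : ℂ) ^ 2 - (‖K x y‖ : ℂ) ^ 2) * ep d k x *
            (starRingEnd ℂ) (ep d k y))
    (k : Fin d → ℤ) (hk : k ≠ 0) :
    (∫ ω, ‖∑ n, ep d k (X n ω)‖ ^ 2 : ℝ) =
      (N : ℝ) - ∏ j, max (2 * (T : ℝ) + 1 - |(k j : ℝ)|) 0 := by
  set B := Fintype.piFinset (fun _ : Fin d => Finset.Icc (-(T:ℤ)) T) with hB
  set C : ℕ := (B.filter fun a => a + k ∈ B).card with hC
  -- pointwise expansion of the inner integrand
  have hpoint : ∀ x y : Fin d → ℝ,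
      ((N : ℂ) ^ 2 - (‖K x y‖ : ℂ) ^ 2) * ep d k x * (starRingEnd ℂ) (ep d k y) =
      ((N : ℂ) ^ 2 * ep d k x) * ep d (-k) y -
        ∑ a ∈ B, ∑ b ∈ B, ep d (a - b + k) x * ep d (b - a - k) y := by
    intro x y
    have habs : ((‖K x y‖ : ℂ)) ^ 2 = K x y * (starRingEnd ℂ) (K x y) := by
      rw [Complex.mul_conj]
      norm_cast
      rw [Complex.normSq_eq_norm_sq]
    have hterm : ∀ a b : Fin d → ℤ,
        ep d a (fun j => x j - y j) * ep d (-b) (fun j => x j - y j) *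
          ep d k x * ep d (-k) y = ep d (a - b + k) x * ep d (b - a - k) y := by
      intro a b
      rw [ep_sub, ep_sub, neg_neg]
      calc ep d a x * ep d (-a) y * (ep d (-b) x * ep d b y) * ep d k x * ep d (-k) y
          = ep d a x * ep d (-b) x * ep d k x *
              (ep d (-a) y * ep d b y * ep d (-k) y) := by ring
        _ = _ := by
            rw [ep_mul, ep_mul, ep_mul, ep_mul]
            congr 2 <;> ring
    rw [habs, ep_conj, hK x y, map_sum]
    simp only [ep_conj]
    rw [Finset.sum_mul_sum]
    rw [sub_mul, sub_mul, Finset.sum_mul, Finset.sum_mul]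
    simp only [Finset.sum_mul]
    congr 1
    refine Finset.sum_congr rfl fun a _ => Finset.sum_congr rfl fun b _ => ?_
    exact hterm a b
  -- the inner integral is constant
  have hinner : ∀ x : Fin d → ℝ,
      (∫ y in cube d, ((N : ℂ) ^ 2 - (‖K x y‖ : ℂ) ^ 2) * ep d k x *
        (starRingEnd ℂ) (ep d k y)) = -(C : ℂ) := by
    intro x
    have hrw : (∫ y in cube d, ((N : ℂ) ^ 2 - (‖K x y‖ : ℂ) ^ 2) * ep d k x *
        (starRingEnd ℂ) (ep d k y)) =
        ∫ y in cube d, (((N : ℂ) ^ 2 * ep d k x) * ep d (-k) y -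
          ∑ a ∈ B, ∑ b ∈ B, ep d (a - b + k) x * ep d (b - a - k) y) :=
      integral_congr_ae (Filter.Eventually.of_forall fun y => hpoint x y)
    have hi1 : IntegrableOn (fun y => ((N : ℂ) ^ 2 * ep d k x) * ep d (-k) y)
        (cube d) := (ep_integrable (-k)).const_mul _
    have hi2 : IntegrableOn (fun y => ∑ a ∈ B, ∑ b ∈ B,
        ep d (a - b + k) x * ep d (b - a - k) y) (cube d) :=
      integrable_finset_sum _ fun a _ => integrable_finset_sum _ fun b _ =>
        (ep_integrable (b - a - k)).const_mul _
    rw [hrw, integral_sub hi1 hi2, MeasureTheory.integral_const_mul, cube_int,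
      if_neg (neg_ne_zero.mpr hk), mul_zero,
      integral_finset_sum _ (fun a _ => integrable_finset_sum _ fun b _ =>
        (ep_integrable (b - a - k)).const_mul _)]
    rw [Finset.sum_congr rfl (fun a (_ : a ∈ B) => integral_finset_sum B
      (fun b _ => (ep_integrable (b - a - k)).const_mul (ep d (a - b + k) x)))]
    have hthis : ∀ a ∈ B, (∑ b ∈ B, ∫ y in cube d,
        ep d (a - b + k) x * ep d (b - a - k) y) =
        if a + k ∈ B then (1 : ℂ) else 0 := by
      intro a _
      have h1 : ∀ b ∈ B, (∫ y in cube d, ep d (a - b + k) x * ep d (b - a - k) y) =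
          if b = a + k then ep d (a - b + k) x else 0 := by
        intro b _
        rw [MeasureTheory.integral_const_mul, cube_int]
        by_cases hb : b = a + k
        · have h0 : b - a - k = 0 := by rw [hb]; ring
          simp [hb, h0]
        · have h0 : b - a - k ≠ 0 := by
            rw [sub_sub, sub_ne_zero]
            exact hb
          simp [hb, h0]
      rw [Finset.sum_congr rfl h1, Finset.sum_ite_eq' B (a + k)
        (fun b => ep d (a - b + k) x)]
      split
      · rw [show a - (a + k) + k = 0 by ring, ep_zero]
      · rfl
    rw [Finset.sum_congr rfl hthis, Finset.sum_boole, zero_sub, hC]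
  -- outer integral
  have houter : (∫ x in cube d, ∫ y in cube d,
      ((N : ℂ) ^ 2 - (‖K x y‖ : ℂ) ^ 2) * ep d k x *
        (starRingEnd ℂ) (ep d k y)) = -(C : ℂ) := by
    have hmeas : MeasurableSet (cube d) :=
      MeasurableSet.univ_pi fun _ => measurableSet_Ico
    rw [MeasureTheory.setIntegral_congr_fun hmeas (fun x _ => hinner x)]
    rw [MeasureTheory.setIntegral_const, measureReal_def, volume_cube, ENNReal.toReal_one, one_smul]
  have hmain := hvar k hk
  rw [houter] at hmain
  have hCr := count_card d T k
  apply Complex.ofReal_injective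
  rw [hmain, ← hCr]
  push_cast
  ring
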